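/- Let s be a schedule over T allowed under an {RC,SI,SSI}-allocation A, not conflict-serializable, with C a cycle in the serialization graph of s and T' the transactions occurring on C. Then there exists a schedule s' over T' allowed under A[T'] that is not conflict-serializable; s' is obtained from s by deleting all operations of transactions outside T' and redirecting each read whose version was written by a deleted transaction to the <<-latest write in T' preceding its original version. -/

import Mathlib

namespace MVCC

/-! Common formalization of multiversion schedules, dependencies,
conflict/view serializability, isolation levels and robustness. -/

inductive Action : Type
  | init | read | write | commit
deriving DecidableEq

/-- The ambient "environment": each operation belongs to a transaction,
has an action kind and an object; there is a special initial operation `op0`,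
and each transaction has a designated commit operation and first operation. -/
structure Env (Obj Tr Opn : Type) where
  tr : Opn → Tr
  act : Opn → Action
  obj : Opn → Obj
  op0 : Opn
  op0_act : act op0 = Action.init
  commitOf : Tr → Opn
  commit_tr : ∀ t, tr (commitOf t) = t
  commit_act : ∀ t, act (commitOf t) = Action.commit
  firstOf : Tr → Opn
  first_tr : ∀ t, tr (firstOf t) = t

variable {Obj Tr Opn : Type}

/-- Operations present in a schedule over the set of transactions `T'`. -/
def Env.opsOver (E : Env Obj Tr Opn) (T' : Set Tr) : Set Opn :=
  {a | a = E.op0 ∨ E.tr a ∈ T'}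

def Env.isRead (E : Env Obj Tr Opn) (a : Opn) : Prop := E.act a = Action.read
def Env.isWrite (E : Env Obj Tr Opn) (a : Opn) : Prop := E.act a = Action.write

/-- A transaction is read-only if it contains no write operations. -/
def Env.readOnly (E : Env Obj Tr Opn) (t : Tr) : Prop := ∀ a, E.tr a = t → ¬ E.isWrite a

/-- A multiversion schedule over the transactions `T'`:
an operation order `lt` (`<_s`), a version order `vlt` (`<<_s`)
and a version function `vf` (`v_s`). -/
structure Schedule (E : Env Obj Tr Opn) (T' : Set Tr) where
  lt : Opn → Opn → Prop
  vlt : Opn → Opn → Prop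
  vf : Opn → Opn
  lt_trans : ∀ a b c, lt a b → lt b c → lt a c
  lt_irrefl : ∀ a, ¬ lt a a
  lt_total : ∀ a ∈ E.opsOver T', ∀ b ∈ E.opsOver T', a ≠ b → lt a b ∨ lt b a
  op0_first : ∀ a ∈ E.opsOver T', a ≠ E.op0 → lt E.op0 a
  first_first : ∀ a ∈ E.opsOver T', a ≠ E.op0 → a ≠ E.firstOf (E.tr a) →
    lt (E.firstOf (E.tr a)) a
  commit_last : ∀ a ∈ E.opsOver T', a ≠ E.op0 → a ≠ E.commitOf (E.tr a) →
    lt a (E.commitOf (E.tr a))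
  vlt_trans : ∀ a b c, vlt a b → vlt b c → vlt a c
  vlt_irrefl : ∀ a, ¬ vlt a a
  vlt_total : ∀ a ∈ E.opsOver T', ∀ b ∈ E.opsOver T', E.isWrite a → E.isWrite b →
    E.obj a = E.obj b → a ≠ b → vlt a b ∨ vlt b a
  vlt_op0_first : ∀ a ∈ E.opsOver T', E.isWrite a → a ≠ E.op0 → vlt E.op0 a
  vf_read : ∀ a ∈ E.opsOver T', E.isRead a →
    vf a = E.op0 ∨ (vf a ∈ E.opsOver T' ∧ E.isWrite (vf a) ∧ E.obj (vf a) = E.obj a)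
  vf_lt : ∀ a ∈ E.opsOver T', E.isRead a → lt (vf a) a

namespace Schedule

variable {E : Env Obj Tr Opn} {T' : Set Tr}

/-- ww-dependency: both writes on the same object, `b <<_s a`. -/
def wwDep (s : Schedule E T') (b a : Opn) : Prop :=
  b ∈ E.opsOver T' ∧ a ∈ E.opsOver T' ∧ E.tr b ≠ E.tr a ∧ E.obj b = E.obj a ∧
    E.isWrite b ∧ E.isWrite a ∧ s.vlt b a

/-- wr-dependency: `b` write, `a` read, `b = v_s(a)` or `b <<_s v_s(a)`. -/
def wrDep (s : Schedule E T') (b a : Opn) : Prop :=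
  b ∈ E.opsOver T' ∧ a ∈ E.opsOver T' ∧ E.tr b ≠ E.tr a ∧ E.obj b = E.obj a ∧
    E.isWrite b ∧ E.isRead a ∧ (b = s.vf a ∨ s.vlt b (s.vf a))

/-- rw-antidependency: `b` read, `a` write, `v_s(b) <<_s a`. -/
def rwDep (s : Schedule E T') (b a : Opn) : Prop :=
  b ∈ E.opsOver T' ∧ a ∈ E.opsOver T' ∧ E.tr b ≠ E.tr a ∧ E.obj b = E.obj a ∧
    E.isRead b ∧ E.isWrite a ∧ s.vlt (s.vf b) a

/-- `a` depends on `b` in `s`. -/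
def dep (s : Schedule E T') (b a : Opn) : Prop :=
  s.wwDep b a ∨ s.wrDep b a ∨ s.rwDep b a

/-- Conflict-equivalence: identical dependencies. -/
def confEquiv (s s' : Schedule E T') : Prop := ∀ b a, s.dep b a ↔ s'.dep b a

/-- `a` installs the last (`<<_s`-maximal) version of its object in `s`. -/
def lastWrite (s : Schedule E T') (a : Opn) : Prop :=
  a ∈ E.opsOver T' ∧ E.isWrite a ∧
    ¬ ∃ c ∈ E.opsOver T', E.isWrite c ∧ E.obj c = E.obj a ∧ s.vlt a c

/-- View-equivalence: same version function on reads and the same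
last installed version per object. -/
def viewEquiv (s s' : Schedule E T') : Prop :=
  (∀ a ∈ E.opsOver T', E.isRead a → s.vf a = s'.vf a) ∧
  (∀ a, s.lastWrite a ↔ s'.lastWrite a)

/-- Single-version schedule: the version order agrees with the operation order
on writes to the same object and every read reads the most recent write. -/
def singleVersion (s : Schedule E T') : Prop :=
  (∀ a ∈ E.opsOver T', ∀ b ∈ E.opsOver T', E.isWrite a → E.isWrite b →
    E.obj a = E.obj b → (s.vlt a b ↔ s.lt a b)) ∧
  (∀ a ∈ E.opsOver T', E.isRead a →
    ¬ ∃ c ∈ E.opsOver T', E.isWrite c ∧ E.obj c = E.obj a ∧ s.lt (s.vf a) c ∧ s.lt c a)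

/-- Serial schedule: transactions are not interleaved. -/
def serial (s : Schedule E T') : Prop :=
  ∀ a b c, a ∈ E.opsOver T' → b ∈ E.opsOver T' → c ∈ E.opsOver T' →
    a ≠ E.op0 → b ≠ E.op0 → c ≠ E.op0 →
    s.lt a b → s.lt b c → E.tr a = E.tr c → E.tr b = E.tr a

def conflictSerializable (s : Schedule E T') : Prop :=
  ∃ s' : Schedule E T', s'.singleVersion ∧ s'.serial ∧ s.confEquiv s'

def viewSerializable (s : Schedule E T') : Prop :=
  ∃ s' : Schedule E T', s'.singleVersion ∧ s'.serial ∧ s.viewEquiv s'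

/-- Edge of the serialization graph. -/
def sgEdge (s : Schedule E T') (ti tj : Tr) : Prop :=
  ∃ b a, s.dep b a ∧ E.tr b = ti ∧ E.tr a = tj

/-- Acyclicity of the serialization graph. -/
def sgAcyclic (s : Schedule E T') : Prop :=
  ∀ t : Tr, ¬ Relation.TransGen s.sgEdge t t

/-- Transaction `ti` occurs (entirely) before transaction `tj` in `s`. -/
def transBefore (s : Schedule E T') (ti tj : Tr) : Prop :=
  ∀ p ∈ E.opsOver T', ∀ q ∈ E.opsOver T', p ≠ E.op0 → q ≠ E.op0 →
    E.tr p = ti → E.tr q = tj → s.lt p q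

/-- Write operation `a` respects the commit order of `s`. -/
def respectsCommitOrder (s : Schedule E T') (a : Opn) : Prop :=
  ∀ b ∈ E.opsOver T', E.isWrite b → E.obj b = E.obj a → E.tr b ≠ E.tr a →
    (s.vlt a b ↔ s.lt (E.commitOf (E.tr a)) (E.commitOf (E.tr b)))

/-- Read operation `b` is read-last-committed in `s` relative to operation `rel`. -/
def readLastCommitted (s : Schedule E T') (b rel : Opn) : Prop :=
  (s.vf b = E.op0 ∨ s.lt (E.commitOf (E.tr (s.vf b))) rel) ∧
  ¬ ∃ c ∈ E.opsOver T', E.isWrite c ∧ E.obj c = E.obj b ∧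
      s.lt (E.commitOf (E.tr c)) rel ∧ s.vlt (s.vf b) c

/-- Transaction `t` exhibits a dirty write in `s`. -/
def dirtyWrite (s : Schedule E T') (t : Tr) : Prop :=
  ∃ b ∈ E.opsOver T', ∃ a ∈ E.opsOver T', E.isWrite b ∧ E.isWrite a ∧
    E.obj b = E.obj a ∧ E.tr a = t ∧ E.tr b ≠ t ∧
    s.lt b a ∧ s.lt a (E.commitOf (E.tr b))

/-- Transaction `t` exhibits a concurrent write in `s`. -/
def concurrentWrite (s : Schedule E T') (t : Tr) : Prop :=
  ∃ b ∈ E.opsOver T', ∃ a ∈ E.opsOver T', E.isWrite b ∧ E.isWrite a ∧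
    E.obj b = E.obj a ∧ E.tr a = t ∧ E.tr b ≠ t ∧
    s.lt b a ∧ s.lt (E.firstOf t) (E.commitOf (E.tr b))

/-- Two transactions are concurrent: each starts before the other commits. -/
def concurrent (s : Schedule E T') (ti tj : Tr) : Prop :=
  s.lt (E.firstOf ti) (E.commitOf tj) ∧ s.lt (E.firstOf tj) (E.commitOf ti)

/-- Transaction `t` is allowed under Read Committed in `s`. -/
def allowedRC (s : Schedule E T') (t : Tr) : Prop :=
  (∀ a ∈ E.opsOver T', E.tr a = t → a ≠ E.op0 → E.isWrite a → s.respectsCommitOrder a) ∧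
  (∀ a ∈ E.opsOver T', E.tr a = t → E.isRead a → s.readLastCommitted a a) ∧
  ¬ s.dirtyWrite t

/-- Transaction `t` is allowed under Snapshot Isolation in `s`. -/
def allowedSI (s : Schedule E T') (t : Tr) : Prop :=
  (∀ a ∈ E.opsOver T', E.tr a = t → a ≠ E.op0 → E.isWrite a → s.respectsCommitOrder a) ∧
  (∀ a ∈ E.opsOver T', E.tr a = t → E.isRead a → s.readLastCommitted a (E.firstOf t)) ∧
  ¬ s.concurrentWrite t

/-- There is a rw-antidependency from (an operation of) `ti` to `tj`. -/
def rwEdge (s : Schedule E T') (ti tj : Tr) : Prop :=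
  ∃ b a, s.rwDep b a ∧ E.tr b = ti ∧ E.tr a = tj

/-- Dangerous structure `t1 → t2 → t3`. -/
def dangerous (s : Schedule E T') (t1 t2 t3 : Tr) : Prop :=
  s.rwEdge t1 t2 ∧ s.rwEdge t2 t3 ∧ s.concurrent t1 t2 ∧ s.concurrent t2 t3 ∧
  s.lt (E.commitOf t3) (E.commitOf t1) ∧ s.lt (E.commitOf t3) (E.commitOf t2) ∧
  (E.readOnly t1 → s.lt (E.commitOf t3) (E.firstOf t1))

end Schedule

inductive IsoLevel : Type
  | RC | SI | SSI
deriving DecidableEq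

/-- A schedule is allowed under the `{RC,SI,SSI}`-allocation `f`. -/
def allowedUnder {E : Env Obj Tr Opn} {T' : Set Tr} (f : Tr → IsoLevel)
    (s : Schedule E T') : Prop :=
  (∀ t ∈ T', f t = IsoLevel.RC → s.allowedRC t) ∧
  (∀ t ∈ T', f t ≠ IsoLevel.RC → s.allowedSI t) ∧
  ¬ ∃ t1 ∈ T', ∃ t2 ∈ T', ∃ t3 ∈ T', f t1 = IsoLevel.SSI ∧ f t2 = IsoLevel.SSI ∧
      f t3 = IsoLevel.SSI ∧ s.dangerous t1 t2 t3

/-- An (abstract) allocation: for each subset of transactions,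
a set of allowed schedules over that subset. -/
def Allocation (E : Env Obj Tr Opn) : Type _ :=
  (T' : Set Tr) → Schedule E T' → Prop

/-- Conflict-robustness: every allowed schedule over every subset of `T`
is conflict-serializable. -/
def conflictRobust (E : Env Obj Tr Opn) (T : Set Tr) (A : Allocation E) : Prop :=
  ∀ T' : Set Tr, T' ⊆ T → ∀ s : Schedule E T', A T' s → s.conflictSerializable

/-- View-robustness: every allowed schedule over every subset of `T`
is view-serializable. -/
def viewRobust (E : Env Obj Tr Opn) (T : Set Tr) (A : Allocation E) : Prop :=
  ∀ T' : Set Tr, T' ⊆ T → ∀ s : Schedule E T', A T' s → s.viewSerializable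

/-- `s` is a generalized split schedule over the transactions `σ 0, …, σ (n-1)`
(cyclically ordered) with split operation `b1` of transaction `σ 0`. -/
def isGenSplitWith {E : Env Obj Tr Opn} {T' : Set Tr} (s : Schedule E T')
    (n : ℕ) (σ : ZMod n → Tr) (b1 : Opn) : Prop :=
  2 ≤ n ∧ Function.Injective σ ∧ Set.range σ = T' ∧
  b1 ∈ E.opsOver T' ∧ b1 ≠ E.op0 ∧ E.tr b1 = σ 0 ∧
  -- shape: prefix(T1, b1) comes before all operations of T2 … Tn
  (∀ a ∈ E.opsOver T', a ≠ E.op0 → E.tr a = σ 0 → (a = b1 ∨ s.lt a b1) →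
    ∀ c ∈ E.opsOver T', c ≠ E.op0 → E.tr c ≠ σ 0 → s.lt a c) ∧
  -- shape: postfix(T1, b1) comes after all operations of T2 … Tn
  (∀ a ∈ E.opsOver T', a ≠ E.op0 → E.tr a = σ 0 → s.lt b1 a →
    ∀ c ∈ E.opsOver T', c ≠ E.op0 → E.tr c ≠ σ 0 → s.lt c a) ∧
  -- shape: T2 … Tn occur serially, in order
  (∀ i j : ZMod n, i ≠ 0 → j ≠ 0 → i.val < j.val →
    ∀ a ∈ E.opsOver T', ∀ c ∈ E.opsOver T', a ≠ E.op0 → c ≠ E.op0 →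
      E.tr a = σ i → E.tr c = σ j → s.lt a c) ∧
  -- (1) there is a cyclic chain of dependencies
  (∀ i : ZMod n, ∃ b a, s.dep b a ∧ E.tr b = σ i ∧ E.tr a = σ (i + 1)) ∧
  -- (2) the cycle is minimal: all dependencies are between consecutive pairs
  (∀ b a, s.dep b a → ∃ i : ZMod n, E.tr b = σ i ∧ E.tr a = σ (i + 1)) ∧
  -- (3) write operations respect the commit order
  (∀ a ∈ E.opsOver T', a ≠ E.op0 → E.isWrite a → s.respectsCommitOrder a)

/-- `s` is a generalized split schedule. -/
def isGenSplit {E : Env Obj Tr Opn} {T' : Set Tr} (s : Schedule E T') : Prop :=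
  ∃ (n : ℕ) (σ : ZMod n → Tr) (b1 : Opn), isGenSplitWith s n σ b1


section Stmt11Aux

namespace Stmt11

variable {Obj Tr Opn : Type} {E : Env Obj Tr Opn}

lemma ne_op0_of_write {a : Opn} (h : E.isWrite a) : a ≠ E.op0 := by
  intro he
  have h2 : Action.init = Action.write := by rw [← E.op0_act, ← he]; exact h
  exact absurd h2 (by decide)

lemma ne_op0_of_read {a : Opn} (h : E.isRead a) : a ≠ E.op0 := by
  intro he
  have h2 : Action.init = Action.read := by rw [← E.op0_act, ← he]; exact h
  exact absurd h2 (by decide)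

lemma commit_ne_op0 (E : Env Obj Tr Opn) (t : Tr) : E.commitOf t ≠ E.op0 := by
  intro he
  have h := E.commit_act t
  rw [he, E.op0_act] at h
  exact absurd h (by decide)

lemma write_ne_commit {a : Opn} (h : E.isWrite a) (t : Tr) : a ≠ E.commitOf t := by
  intro he
  have h2 := E.commit_act t
  rw [← he] at h2
  rw [Env.isWrite, h2] at h
  exact absurd h (by decide)

lemma tr_mem {T' : Set Tr} {a : Opn} (ha : a ∈ E.opsOver T') (h0 : a ≠ E.op0) :
    E.tr a ∈ T' := ha.resolve_left h0

lemma mem_opsOver {T' : Set Tr} {a : Opn} (h : E.tr a ∈ T') : a ∈ E.opsOver T' := Or.inr h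

lemma opsOver_mono {T T' : Set Tr} (h : T' ⊆ T) : E.opsOver T' ⊆ E.opsOver T :=
  fun _ ha => ha.imp id fun ht => h ht

lemma commit_mem {T' : Set Tr} {t : Tr} (ht : t ∈ T') : E.commitOf t ∈ E.opsOver T' :=
  Or.inr (by rw [E.commit_tr]; exact ht)

lemma commit_inj {t u : Tr} (h : E.commitOf t = E.commitOf u) : t = u := by
  have h2 := E.commit_tr t
  rw [h, E.commit_tr] at h2
  exact h2.symm

lemma exists_greatest {α : Type*} (r : α → α → Prop)
    (htr : ∀ {a b c}, r a b → r b c → r a c) (F : Finset α) :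
    F.Nonempty → (∀ a ∈ F, ∀ b ∈ F, a ≠ b → r a b ∨ r b a) →
      ∃ m ∈ F, ∀ c ∈ F, c ≠ m → r c m := by
  classical
  induction F using Finset.induction_on with
  | empty => intro h; simp at h
  | @insert a F' ha ih =>
    intro _ htot
    rcases F'.eq_empty_or_nonempty with he | hne
    · subst he
      refine ⟨a, by simp, ?_⟩
      intro c hc hca
      simp only [Finset.mem_insert, Finset.notMem_empty, or_false] at hc
      exact absurd hc hca
    · obtain ⟨m, hmF, hmax⟩ := ih hne
        (fun x hx y hy => htot x (Finset.mem_insert_of_mem hx) y (Finset.mem_insert_of_mem hy))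
      have ham : a ≠ m := fun h => ha (h ▸ hmF)
      rcases htot a (Finset.mem_insert_self a F') m (Finset.mem_insert_of_mem hmF) ham
        with h1 | h1
      · refine ⟨m, Finset.mem_insert_of_mem hmF, ?_⟩
        intro c hc hcm
        rcases Finset.mem_insert.mp hc with rfl | hc'
        · exact h1
        · exact hmax c hc' hcm
      · refine ⟨a, Finset.mem_insert_self a F', ?_⟩
        intro c hc hca
        rcases Finset.mem_insert.mp hc with rfl | hc'
        · exact absurd rfl hca
        · by_cases hcm : c = m
          · subst hcm; exact h1
          · exact htr (hmax c hc' hcm) h1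

lemma serialSV_acyclic {T' : Set Tr} (s2 : Schedule E T') (hsv : s2.singleVersion)
    (hser : s2.serial) (t : Tr) : ¬ Relation.TransGen s2.sgEdge t t := by
  classical
  set TB : Tr → Tr → Prop := fun tu tv => tv ∈ T' ∧
    ∀ p ∈ E.opsOver T', p ≠ E.op0 → E.tr p = tu →
      ∀ q ∈ E.opsOver T', q ≠ E.op0 → E.tr q = tv → s2.lt p q with hTBdef
  have hstep : ∀ {tu tv}, s2.sgEdge tu tv → TB tu tv := by
    rintro tu tv ⟨b, a, hd, hbt, hat⟩
    have hfacts : b ∈ E.opsOver T' ∧ a ∈ E.opsOver T' ∧ b ≠ E.op0 ∧ a ≠ E.op0 ∧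
        E.tr b ≠ E.tr a ∧ s2.lt b a := by
      rcases hd with ⟨hb, ha, htr, hobj, hwb, hwa, hv⟩ |
        ⟨hb, ha, htr, hobj, hwb, hra, hv⟩ | ⟨hb, ha, htr, hobj, hrb, hwa, hv⟩
      · exact ⟨hb, ha, ne_op0_of_write hwb, ne_op0_of_write hwa, htr,
          (hsv.1 b hb a ha hwb hwa hobj).mp hv⟩
      · refine ⟨hb, ha, ne_op0_of_write hwb, ne_op0_of_read hra, htr, ?_⟩
        rcases hv with he | hv
        · rw [he]; exact s2.vf_lt a ha hra
        · have hvne : s2.vf a ≠ E.op0 := by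
            intro hh
            rw [hh] at hv
            exact s2.vlt_irrefl b
              (s2.vlt_trans _ _ _ hv (s2.vlt_op0_first b hb hwb (ne_op0_of_write hwb)))
          obtain ⟨hvO, hvw, hvobj⟩ := (s2.vf_read a ha hra).resolve_left hvne
          exact s2.lt_trans _ _ _
            ((hsv.1 b hb _ hvO hwb hvw (hobj.trans hvobj.symm)).mp hv)
            (s2.vf_lt a ha hra)
      · refine ⟨hb, ha, ne_op0_of_read hrb, ne_op0_of_write hwa, htr, ?_⟩
        by_contra hnl
        have hba : b ≠ a := fun h => htr (by rw [h])
        have hab : s2.lt a b := (s2.lt_total b hb a ha hba).resolve_left hnl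
        refine hsv.2 b hb hrb ⟨a, ha, hwa, hobj.symm, ?_, hab⟩
        by_cases h0 : s2.vf b = E.op0
        · rw [h0]
          exact s2.op0_first a ha (ne_op0_of_write hwa)
        · obtain ⟨hvO, hvw, hvobj⟩ := (s2.vf_read b hb hrb).resolve_left h0
          exact (hsv.1 _ hvO a ha hvw hwa (hvobj.trans hobj)).mp hv
    obtain ⟨hb, ha, hb0, ha0, htr, hlt⟩ := hfacts
    refine ⟨by rw [← hat]; exact tr_mem ha ha0, ?_⟩
    intro p hp hp0 hpt q hq hq0 hqt
    have hpq : p ≠ q := by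
      intro h
      exact htr (by rw [hbt, ← hpt, h, hqt, ← hat])
    by_contra hnl
    have hqp : s2.lt q p := (s2.lt_total p hp q hq hpq).resolve_left hnl
    have hbq : b ≠ q := by
      intro h
      exact htr (by rw [h, hqt, ← hat])
    rcases s2.lt_total b hb q hq hbq with h1 | h1
    · by_cases hbp : b = p
      · exact s2.lt_irrefl b (s2.lt_trans _ _ _ h1 (hbp ▸ hqp))
      · have h2 := hser b q p hb hq hp hb0 hq0 hp0 h1 hqp (by rw [hpt, ← hbt])
        exact htr (h2.symm.trans (hqt.trans hat.symm))
    · have h2 := hser q b a hq hb ha hq0 hb0 ha0 h1 hlt (by rw [hqt, ← hat])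
      exact htr (h2.trans (hqt.trans hat.symm))
  have htrans : ∀ {t1 t2 t3}, TB t1 t2 → TB t2 t3 → TB t1 t3 := by
    rintro t1 t2 t3 ⟨h2T, h12⟩ ⟨h3T, h23⟩
    refine ⟨h3T, ?_⟩
    intro p hp hp0 hpt q hq hq0 hqt
    have hc : E.commitOf t2 ∈ E.opsOver T' := commit_mem h2T
    exact s2.lt_trans _ _ _
      (h12 p hp hp0 hpt _ hc (commit_ne_op0 E t2) (E.commit_tr t2))
      (h23 _ hc (commit_ne_op0 E t2) (E.commit_tr t2) q hq hq0 hqt)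
  intro hcyc
  have hTB : ∀ u, Relation.TransGen s2.sgEdge t u → TB t u := by
    intro u h
    induction h with
    | single h => exact hstep h
    | tail _ h2 ih => exact htrans ih (hstep h2)
  obtain ⟨htT, hall⟩ := hTB t hcyc
  exact s2.lt_irrefl _ (hall _ (commit_mem htT) (commit_ne_op0 E t) (E.commit_tr t)
    _ (commit_mem htT) (commit_ne_op0 E t) (E.commit_tr t))


variable (f : Tr → IsoLevel)

/-- The "relative-to" operation of a read: itself for RC, the first operation of its
transaction otherwise. -/
def relOf (E : Env Obj Tr Opn) (b : Opn) : Opn :=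
  if f (E.tr b) = IsoLevel.RC then b else E.firstOf (E.tr b)

variable {T : Set Tr} (T' : Set Tr) (s : Schedule E T)

/-- Writes in `opsOver T'` on the object of `b` committed before `relOf b`. -/
def Sset (b : Opn) : Set Opn :=
  {c | c ∈ E.opsOver T' ∧ E.isWrite c ∧ E.obj c = E.obj b ∧
    s.lt (E.commitOf (E.tr c)) (relOf f E b)}

/-- The version order of the restricted schedule: commit order across transactions,
a reverse well-order within a transaction. -/
def vlt2 (x y : Opn) : Prop :=
  (x = E.op0 ∧ y ≠ E.op0) ∨
  (x ≠ E.op0 ∧ y ≠ E.op0 ∧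
    ((E.tr x ≠ E.tr y ∧ s.lt (E.commitOf (E.tr x)) (E.commitOf (E.tr y))) ∨
     (E.tr x = E.tr y ∧ WellOrderingRel y x)))

/-- `m` is the `vlt2`-greatest element of `Sset b`. -/
def Dom (b m : Opn) : Prop :=
  m ∈ Sset f T' s b ∧ ∀ c ∈ Sset f T' s b, c = m ∨ vlt2 s c m

open Classical in
noncomputable def vf2 (b : Opn) : Opn :=
  if h : ∃ m, Dom f T' s b m then h.choose else E.op0

lemma vlt2_irrefl (x : Opn) : ¬ vlt2 s x x := by
  rintro (⟨h1, h2⟩ | ⟨h1, h2, (⟨h3, _⟩ | ⟨_, h4⟩)⟩)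
  · exact h2 h1
  · exact h3 rfl
  · exact irrefl_of WellOrderingRel x h4

lemma vlt2_trans {x y z : Opn} (h1 : vlt2 s x y) (h2 : vlt2 s y z) : vlt2 s x z := by
  rcases h1 with ⟨hx, hy⟩ | ⟨hx, hy, hc1⟩
  · rcases h2 with ⟨hy2, _⟩ | ⟨_, hz, _⟩
    · exact absurd hy2 hy
    · exact Or.inl ⟨hx, hz⟩
  · rcases h2 with ⟨hy2, _⟩ | ⟨_, hz, hc2⟩
    · exact absurd hy2 hy
    · refine Or.inr ⟨hx, hz, ?_⟩
      rcases hc1 with ⟨hne1, hlt1⟩ | ⟨heq1, hw1⟩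
      · rcases hc2 with ⟨hne2, hlt2⟩ | ⟨heq2, hw2⟩
        · left
          have hlt := s.lt_trans _ _ _ hlt1 hlt2
          refine ⟨?_, hlt⟩
          intro he
          rw [he] at hlt
          exact s.lt_irrefl _ hlt
        · left
          refine ⟨fun h => hne1 (h.trans heq2.symm), ?_⟩
          rw [← heq2]
          exact hlt1
      · rcases hc2 with ⟨hne2, hlt2⟩ | ⟨heq2, hw2⟩
        · left
          refine ⟨fun h => hne2 (by rw [← heq1]; exact h), ?_⟩
          rw [heq1]
          exact hlt2
        · exact Or.inr ⟨heq1.trans heq2, trans_of WellOrderingRel hw2 hw1⟩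

lemma vlt2_asymm {x y : Opn} (h1 : vlt2 s x y) (h2 : vlt2 s y x) : False :=
  vlt2_irrefl s x (vlt2_trans s h1 h2)

lemma vlt2_cross {x y : Opn} (hx : x ≠ E.op0) (hy : y ≠ E.op0) (ht : E.tr x ≠ E.tr y) :
    vlt2 s x y ↔ s.lt (E.commitOf (E.tr x)) (E.commitOf (E.tr y)) := by
  constructor
  · rintro (⟨h1, _⟩ | ⟨_, _, ⟨_, h⟩ | ⟨h, _⟩⟩)
    · exact absurd h1 hx
    · exact h
    · exact absurd h ht
  · intro h
    exact Or.inr ⟨hx, hy, Or.inl ⟨ht, h⟩⟩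

/-- The restricted schedule. -/
noncomputable def restrict (hsub : T' ⊆ T) : Schedule E T' where
  lt := s.lt
  vlt := vlt2 s
  vf := vf2 f T' s
  lt_trans := s.lt_trans
  lt_irrefl := s.lt_irrefl
  lt_total := fun a ha b hb hab =>
    s.lt_total a (opsOver_mono hsub ha) b (opsOver_mono hsub hb) hab
  op0_first := fun a ha h0 => s.op0_first a (opsOver_mono hsub ha) h0
  first_first := fun a ha h0 hf => s.first_first a (opsOver_mono hsub ha) h0 hf
  commit_last := fun a ha h0 hc => s.commit_last a (opsOver_mono hsub ha) h0 hc
  vlt_trans := fun _ _ _ h1 h2 => vlt2_trans s h1 h2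
  vlt_irrefl := fun a => vlt2_irrefl s a
  vlt_total := by
    intro a ha b hb hwa hwb hobj hab
    have ha0 := ne_op0_of_write hwa
    have hb0 := ne_op0_of_write hwb
    by_cases ht : E.tr a = E.tr b
    · rcases trichotomous_of WellOrderingRel a b with h | h | h
      · exact Or.inr (Or.inr ⟨hb0, ha0, Or.inr ⟨ht.symm, h⟩⟩)
      · exact absurd h hab
      · exact Or.inl (Or.inr ⟨ha0, hb0, Or.inr ⟨ht, h⟩⟩)
    · have hca : E.commitOf (E.tr a) ∈ E.opsOver T :=
        opsOver_mono hsub (commit_mem (tr_mem ha ha0))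
      have hcb : E.commitOf (E.tr b) ∈ E.opsOver T :=
        opsOver_mono hsub (commit_mem (tr_mem hb hb0))
      have hcc : E.commitOf (E.tr a) ≠ E.commitOf (E.tr b) := fun h => ht (commit_inj h)
      rcases s.lt_total _ hca _ hcb hcc with h | h
      · exact Or.inl (Or.inr ⟨ha0, hb0, Or.inl ⟨ht, h⟩⟩)
      · exact Or.inr (Or.inr ⟨hb0, ha0, Or.inl ⟨fun he => ht he.symm, h⟩⟩)
  vlt_op0_first := fun a _ _ h0 => Or.inl ⟨rfl, h0⟩
  vf_read := by
    intro a ha hr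
    by_cases h : ∃ m, Dom f T' s a m
    · right
      rw [vf2, dif_pos h]
      obtain ⟨hmS, _⟩ := h.choose_spec
      exact ⟨hmS.1, hmS.2.1, hmS.2.2.1⟩
    · left
      rw [vf2, dif_neg h]
  vf_lt := by
    intro a ha hr
    have ha0 := ne_op0_of_read hr
    by_cases h : ∃ m, Dom f T' s a m
    · rw [vf2, dif_pos h]
      obtain ⟨⟨hmO, hmw, _, hml⟩, _⟩ := h.choose_spec
      have hm0 := ne_op0_of_write hmw
      have h1 : s.lt h.choose (E.commitOf (E.tr h.choose)) :=
        s.commit_last _ (opsOver_mono hsub hmO) hm0 (write_ne_commit hmw _)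
      have h2 : s.lt h.choose (relOf f E a) := s.lt_trans _ _ _ h1 hml
      rw [relOf] at h2
      split_ifs at h2 with hf
      · exact h2
      · by_cases hfa : a = E.firstOf (E.tr a)
        · rw [← hfa] at h2; exact h2
        · exact s.lt_trans _ _ _ h2 (s.first_first a (opsOver_mono hsub ha) ha0 hfa)
    · rw [vf2, dif_neg h]
      exact s.op0_first a (opsOver_mono hsub ha) ha0

variable (hsub : T' ⊆ T)

@[simp] lemma restrict_lt : (restrict f T' s hsub).lt = s.lt := rfl
@[simp] lemma restrict_vlt : (restrict f T' s hsub).vlt = vlt2 s := rfl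
@[simp] lemma restrict_vf : (restrict f T' s hsub).vf = vf2 f T' s := rfl

lemma resp_s (hallow : allowedUnder f s) {a : Opn} (ha : a ∈ E.opsOver T)
    (hat : E.tr a ∈ T) (hw : E.isWrite a) : s.respectsCommitOrder a := by
  by_cases hf : f (E.tr a) = IsoLevel.RC
  · exact (hallow.1 _ hat hf).1 a ha rfl (ne_op0_of_write hw) hw
  · exact (hallow.2.1 _ hat hf).1 a ha rfl (ne_op0_of_write hw) hw

lemma rlc_s (hallow : allowedUnder f s) {b : Opn} (hb : b ∈ E.opsOver T)
    (hbt : E.tr b ∈ T) (hr : E.isRead b) : s.readLastCommitted b (relOf f E b) := by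
  rw [relOf]
  by_cases hf : f (E.tr b) = IsoLevel.RC
  · rw [if_pos hf]
    exact (hallow.1 _ hbt hf).2.1 b hb rfl hr
  · rw [if_neg hf]
    exact (hallow.2.1 _ hbt hf).2.1 b hb rfl hr

include hsub

lemma dom_exists (hfin : T'.Finite) {b : Opn} (hne : (Sset f T' s b).Nonempty) :
    ∃ m, Dom f T' s b m := by
  classical
  obtain ⟨c0, hc0⟩ := hne
  have hSsub : ∀ c ∈ Sset f T' s b, E.tr c ∈ T' :=
    fun c hc => tr_mem hc.1 (ne_op0_of_write hc.2.1)
  set TS : Set Tr := {t | t ∈ T' ∧ ∃ c ∈ Sset f T' s b, E.tr c = t} with hTSdef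
  have hTSfin : TS.Finite := hfin.subset fun t ht => ht.1
  have hTSne : hTSfin.toFinset.Nonempty := by
    refine ⟨E.tr c0, ?_⟩
    rw [Set.Finite.mem_toFinset]
    exact ⟨hSsub c0 hc0, c0, hc0, rfl⟩
  have htot : ∀ t ∈ hTSfin.toFinset, ∀ u ∈ hTSfin.toFinset, t ≠ u →
      s.lt (E.commitOf t) (E.commitOf u) ∨ s.lt (E.commitOf u) (E.commitOf t) := by
    intro t ht u hu htu
    rw [Set.Finite.mem_toFinset] at ht hu
    have hct : E.commitOf t ∈ E.opsOver T := opsOver_mono hsub (commit_mem ht.1)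
    have hcu : E.commitOf u ∈ E.opsOver T := opsOver_mono hsub (commit_mem hu.1)
    exact s.lt_total _ hct _ hcu fun h => htu (commit_inj h)
  obtain ⟨tstar, htF, hmax⟩ := exists_greatest
    (fun t u => s.lt (E.commitOf t) (E.commitOf u))
    (fun h1 h2 => s.lt_trans _ _ _ h1 h2) hTSfin.toFinset hTSne htot
  · rw [Set.Finite.mem_toFinset] at htF
    obtain ⟨htT', c1, hc1S, hc1t⟩ := htF
    set W : Set Opn := {c | c ∈ Sset f T' s b ∧ E.tr c = tstar} with hWdef
    have hWne : W.Nonempty := ⟨c1, hc1S, hc1t⟩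
    have wf : WellFounded (@WellOrderingRel Opn) := IsWellFounded.wf
    set m : Opn := wf.min W hWne with hmdef
    have hmW : m ∈ W := wf.min_mem W hWne
    refine ⟨m, hmW.1, ?_⟩
    intro c hc
    by_cases hcm : c = m
    · exact Or.inl hcm
    right
    have hc0' := ne_op0_of_write hc.2.1
    have hm0' := ne_op0_of_write hmW.1.2.1
    by_cases hct : E.tr c = tstar
    · have hnlt : ¬ WellOrderingRel c m := wf.not_lt_min W (show c ∈ W from ⟨hc, hct⟩)
      rcases trichotomous_of WellOrderingRel c m with h | h | h
      · exact absurd h hnlt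
      · exact absurd h hcm
      · exact Or.inr ⟨hc0', hm0', Or.inr ⟨hct.trans hmW.2.symm, h⟩⟩
    · have hcTS : E.tr c ∈ hTSfin.toFinset := by
        rw [Set.Finite.mem_toFinset]
        exact ⟨hSsub c hc, c, hc, rfl⟩
      have hlt := hmax (E.tr c) hcTS hct
      refine Or.inr ⟨hc0', hm0', Or.inl ⟨?_, ?_⟩⟩
      · rw [hmW.2]; exact hct
      · rw [hmW.2]; exact hlt

lemma vf2_spec (hfin : T'.Finite) (b : Opn) :
    (vf2 f T' s b = E.op0 ∧ Sset f T' s b = ∅) ∨ Dom f T' s b (vf2 f T' s b) := by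
  by_cases h : ∃ m, Dom f T' s b m
  · right
    rw [vf2, dif_pos h]
    exact h.choose_spec
  · left
    refine ⟨by rw [vf2, dif_neg h], ?_⟩
    by_contra hS
    exact h (dom_exists f T' s hsub hfin (Set.nonempty_iff_ne_empty.mpr hS))

lemma rlc' (hfin : T'.Finite) {b : Opn} (hb : b ∈ E.opsOver T') (hr : E.isRead b) :
    (restrict f T' s hsub).readLastCommitted b (relOf f E b) := by
  constructor
  · rcases vf2_spec f T' s hsub hfin b with ⟨h0, _⟩ | hDom
    · left; exact h0
    · right; exact hDom.1.2.2.2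
  · rintro ⟨c, hc, hcw, hcobj, hclt, hcv⟩
    have hcS : c ∈ Sset f T' s b := ⟨hc, hcw, hcobj, hclt⟩
    rcases vf2_spec f T' s hsub hfin b with ⟨_, hSe⟩ | hDom
    · rw [hSe] at hcS
      exact hcS
    · rcases hDom.2 c hcS with he | hlt
      · rw [he] at hcv
        exact vlt2_irrefl s _ hcv
      · exact vlt2_asymm s hcv hlt

lemma resp' {a : Opn} (hw : E.isWrite a) :
    (restrict f T' s hsub).respectsCommitOrder a := by
  intro b _ hbw _ hbt
  exact vlt2_cross s (ne_op0_of_write hw) (ne_op0_of_write hbw) (fun h => hbt h.symm)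

lemma rw_back (hfin : T'.Finite) (hallow : allowedUnder f s) {b a : Opn}
    (h : (restrict f T' s hsub).rwDep b a) : s.rwDep b a := by
  obtain ⟨hb, ha, htr, hobj, hrb, hwa, hv⟩ := h
  rw [restrict_vlt, restrict_vf] at hv
  have hb0 := ne_op0_of_read hrb
  have ha0 := ne_op0_of_write hwa
  have hbT : E.tr b ∈ T := hsub (tr_mem hb hb0)
  have haT : E.tr a ∈ T := hsub (tr_mem ha ha0)
  have hbO : b ∈ E.opsOver T := opsOver_mono hsub hb
  have haO : a ∈ E.opsOver T := opsOver_mono hsub ha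
  have hrlc := rlc_s f s hallow hbO hbT hrb
  have haS : a ∉ Sset f T' s b := by
    intro haS
    rcases vf2_spec f T' s hsub hfin b with ⟨_, hSe⟩ | hDom
    · rw [hSe] at haS
      exact haS
    · rcases hDom.2 a haS with he | hlt
      · rw [he] at hv
        exact vlt2_irrefl s _ hv
      · exact vlt2_asymm s hv hlt
  refine ⟨hbO, haO, htr, hobj, hrb, hwa, ?_⟩
  by_contra hnv
  by_cases h0 : s.vf b = E.op0
  · exact hnv (h0 ▸ s.vlt_op0_first a haO hwa ha0)
  · obtain ⟨hvO, hvw, hvobj⟩ := (s.vf_read b hbO hrb).resolve_left h0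
    have h1 : s.vf b ≠ a := by
      intro he
      rcases hrlc.1 with h2 | h2
      · exact h0 h2
      · rw [he] at h2
        exact haS ⟨ha, hwa, hobj.symm, h2⟩
    have h2 : s.vlt a (s.vf b) := by
      rcases s.vlt_total a haO (s.vf b) hvO hwa hvw ((hvobj.trans hobj).symm)
        (fun he => h1 he.symm) with h | h
      · exact h
      · exact absurd h hnv
    have h3 : s.lt (E.commitOf (E.tr a)) (relOf f E b) := by
      rcases hrlc.1 with hc | hc
      · exact absurd hc h0
      · by_cases hta : E.tr a = E.tr (s.vf b)
        · rw [hta]; exact hc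
        · have h4 := ((resp_s f s hallow haO haT hwa) (s.vf b) hvO hvw
            (hvobj.trans hobj) (fun he => hta he.symm)).mp h2
          exact s.lt_trans _ _ _ h4 hc
    exact haS ⟨ha, hwa, hobj.symm, h3⟩

lemma dep_fwd (hfin : T'.Finite) (hallow : allowedUnder f s) {b a : Opn}
    (hd : s.dep b a) (hbt : E.tr b ∈ T') (hat : E.tr a ∈ T') :
    (restrict f T' s hsub).dep b a := by
  have hbT : E.tr b ∈ T := hsub hbt
  have haT : E.tr a ∈ T := hsub hat
  rcases hd with ⟨hbO, haO, htr, hobj, hwb, hwa, hv⟩ |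
    ⟨hbO, haO, htr, hobj, hwb, hra, hv⟩ | ⟨hbO, haO, htr, hobj, hrb, hwa, hv⟩
  · -- ww
    refine Or.inl ⟨mem_opsOver hbt, mem_opsOver hat, htr, hobj, hwb, hwa, ?_⟩
    show vlt2 s b a
    have hlt := ((resp_s f s hallow hbO hbT hwb) a haO hwa hobj.symm
      (fun h => htr h.symm)).mp hv
    exact (vlt2_cross s (ne_op0_of_write hwb) (ne_op0_of_write hwa) htr).mpr hlt
  · -- wr
    have hrlca := rlc_s f s hallow haO haT hra
    have hbS : b ∈ Sset f T' s a := by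
      refine ⟨mem_opsOver hbt, hwb, hobj, ?_⟩
      rcases hv with he | hv
      · rcases hrlca.1 with h2 | h2
        · rw [← he] at h2
          exact absurd h2 (ne_op0_of_write hwb)
        · rw [he]; exact h2
      · have hvne : s.vf a ≠ E.op0 := by
          intro hh
          rw [hh] at hv
          exact s.vlt_irrefl b
            (s.vlt_trans _ _ _ hv (s.vlt_op0_first b hbO hwb (ne_op0_of_write hwb)))
        obtain ⟨hvO, hvw, hvobj⟩ := (s.vf_read a haO hra).resolve_left hvne
        rcases hrlca.1 with h2 | h2
        · exact absurd h2 hvne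
        · by_cases htb : E.tr b = E.tr (s.vf a)
          · rw [htb]; exact h2
          · have h4 := ((resp_s f s hallow hbO hbT hwb) (s.vf a) hvO hvw
              (hvobj.trans hobj.symm) (fun he => htb he.symm)).mp hv
            exact s.lt_trans _ _ _ h4 h2
    rcases vf2_spec f T' s hsub hfin a with ⟨_, hSe⟩ | hDom
    · rw [hSe] at hbS
      exact absurd hbS (Set.notMem_empty b)
    · refine Or.inr (Or.inl ⟨mem_opsOver hbt, mem_opsOver hat, htr, hobj, hwb, hra, ?_⟩)
      rcases hDom.2 b hbS with he | hlt
      · left; exact he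
      · right; exact hlt
  · -- rw
    refine Or.inr (Or.inr ⟨mem_opsOver hbt, mem_opsOver hat, htr, hobj, hrb, hwa, ?_⟩)
    show vlt2 s (vf2 f T' s b) a
    have hbO' : b ∈ E.opsOver T := hbO
    rcases vf2_spec f T' s hsub hfin b with ⟨h0, _⟩ | hDom
    · rw [h0]
      exact Or.inl ⟨rfl, ne_op0_of_write hwa⟩
    · obtain ⟨⟨hmO, hmw, hmobj, hml⟩, _⟩ := hDom
      have hrlc := rlc_s f s hallow hbO hbT hrb
      have hmta : E.tr (vf2 f T' s b) ≠ E.tr a := by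
        intro he
        exact hrlc.2 ⟨a, haO, hwa, hobj.symm, he ▸ hml, hv⟩
      have hmOT : vf2 f T' s b ∈ E.opsOver T := opsOver_mono hsub hmO
      have hvma : s.vlt (vf2 f T' s b) a := by
        by_cases hme : vf2 f T' s b = s.vf b
        · rw [hme]; exact hv
        · have hvne : s.vf b ≠ E.op0 := by
            intro hh
            exact hrlc.2 ⟨vf2 f T' s b, hmOT, hmw, hmobj, hml,
              hh ▸ s.vlt_op0_first _ hmOT hmw (ne_op0_of_write hmw)⟩
          obtain ⟨hvO, hvw, hvobj⟩ := (s.vf_read b hbO hrb).resolve_left hvne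
          have h5 : s.vlt (vf2 f T' s b) (s.vf b) := by
            rcases s.vlt_total _ hmOT _ hvO hmw hvw (hmobj.trans hvobj.symm) hme
              with h | h
            · exact h
            · exact (hrlc.2 ⟨vf2 f T' s b, hmOT, hmw, hmobj, hml, h⟩).elim
          exact s.vlt_trans _ _ _ h5 hv
      have hlt := ((resp_s f s hallow hmOT
          (hsub (tr_mem hmO (ne_op0_of_write hmw))) hmw) a haO hwa
          ((hmobj.trans hobj).symm) (fun he => hmta he.symm)).mp hvma
      exact Or.inr ⟨ne_op0_of_write hmw, ne_op0_of_write hwa, Or.inl ⟨hmta, hlt⟩⟩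

lemma allowed' (hfin : T'.Finite) (hallow : allowedUnder f s) :
    allowedUnder f (restrict f T' s hsub) := by
  refine ⟨?_, ?_, ?_⟩
  · intro t ht hf
    refine ⟨?_, ?_, ?_⟩
    · intro a _ _ _ hw
      exact resp' f T' s hsub hw
    · intro a ha hat hr
      have h := rlc' f T' s hsub hfin ha hr
      rwa [relOf, hat, if_pos hf] at h
    · intro hd
      obtain ⟨b, hb, a, ha, hwb, hwa, hobj, hta, htb, h1, h2⟩ := hd
      exact (hallow.1 t (hsub ht) hf).2.2
        ⟨b, opsOver_mono hsub hb, a, opsOver_mono hsub ha, hwb, hwa, hobj, hta, htb, h1, h2⟩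
  · intro t ht hf
    refine ⟨?_, ?_, ?_⟩
    · intro a _ _ _ hw
      exact resp' f T' s hsub hw
    · intro a ha hat hr
      have h := rlc' f T' s hsub hfin ha hr
      rwa [relOf, hat, if_neg hf] at h
    · intro hd
      obtain ⟨b, hb, a, ha, hwb, hwa, hobj, hta, htb, h1, h2⟩ := hd
      exact (hallow.2.1 t (hsub ht) hf).2.2
        ⟨b, opsOver_mono hsub hb, a, opsOver_mono hsub ha, hwb, hwa, hobj, hta, htb, h1, h2⟩
  · rintro ⟨t1, h1, t2, h2, t3, h3, hf1, hf2, hf3, hd⟩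
    refine hallow.2.2 ⟨t1, hsub h1, t2, hsub h2, t3, hsub h3, hf1, hf2, hf3, ?_⟩
    obtain ⟨he1, he2, hc1, hc2, hl1, hl2, hro⟩ := hd
    refine ⟨?_, ?_, hc1, hc2, hl1, hl2, hro⟩
    · obtain ⟨b, a, hba, hb, ha⟩ := he1
      exact ⟨b, a, rw_back f T' s hsub hfin hallow hba, hb, ha⟩
    · obtain ⟨b, a, hba, hb, ha⟩ := he2
      exact ⟨b, a, rw_back f T' s hsub hfin hallow hba, hb, ha⟩

end Stmt11

end Stmt11Aux

/-- Restricting a non-conflict-serializable schedule allowed under an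
`{RC,SI,SSI}`-allocation to the transactions of a cycle of its serialization graph
yields a non-conflict-serializable schedule over those transactions that is still
allowed under the restricted allocation. -/
theorem stmt11 {Obj Tr Opn : Type} {E : Env Obj Tr Opn} (f : Tr → IsoLevel)
    {T T' : Set Tr} (hsub : T' ⊆ T) (s : Schedule E T)
    (hallow : allowedUnder f s) (hncs : ¬ s.conflictSerializable)
    (n : ℕ) (hn : 2 ≤ n) (σ : ZMod n → Tr) (hinj : Function.Injective σ)
    (hrange : Set.range σ = T')
    (hcycle : ∀ i : ZMod n, s.sgEdge (σ i) (σ (i + 1))) :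
    ∃ s' : Schedule E T', allowedUnder f s' ∧ ¬ s'.conflictSerializable := by
  classical
  have hfin : T'.Finite := by
    rw [← hrange]
    haveI : NeZero n := ⟨by omega⟩
    exact Set.finite_range σ
  refine ⟨Stmt11.restrict f T' s hsub, Stmt11.allowed' f T' s hsub hfin hallow, ?_⟩
  rintro ⟨s2, hsv, hser, heq⟩
  have hedge : ∀ i : ZMod n, s2.sgEdge (σ i) (σ (i + 1)) := by
    intro i
    obtain ⟨b, a, hd, hbt, hat⟩ := hcycle i
    have hbt' : E.tr b ∈ T' := by rw [hbt, ← hrange]; exact Set.mem_range_self i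
    have hat' : E.tr a ∈ T' := by rw [hat, ← hrange]; exact Set.mem_range_self (i + 1)
    exact ⟨b, a, (heq b a).mp (Stmt11.dep_fwd f T' s hsub hfin hallow hd hbt' hat'),
      hbt, hat⟩
  have key : ∀ k : ℕ, Relation.TransGen s2.sgEdge (σ 0) (σ ((k + 1 : ℕ) : ZMod n)) := by
    intro k
    induction k with
    | zero =>
      have h := Relation.TransGen.single (hedge 0)
      simpa using h
    | succ k ih =>
      have h2 := Relation.TransGen.tail ih (hedge ((k + 1 : ℕ) : ZMod n))
      have hc : ((k + 1 + 1 : ℕ) : ZMod n) = ((k + 1 : ℕ) : ZMod n) + 1 := by push_cast; ring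
      rw [hc]
      exact h2
  have hcyc := key (n - 1)
  have hn1 : (n - 1 + 1 : ℕ) = n := by omega
  rw [hn1, ZMod.natCast_self] at hcyc
  exact Stmt11.serialSV_acyclic s2 hsv hser (σ 0) hcyc

end MVCC
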